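/- Let G be an unmixed bipartite graph with pure order on V = {x_1,...,x_d}, W = {y_1,...,y_d}, and let n_1,...,n_d be positive integers. Then the graph G' = G(n_1,...,n_d), obtained by replacing each perfect matching edge x_i y_i with the complete bipartite graph K_{n_i,n_i} while preserving all other adjacencies, is also unmixed. -/

import Mathlib

set_option synthInstance.maxHeartbeats 1000000
set_option maxHeartbeats 1000000
open Classical
noncomputable section

/-- A (abstract) simplicial complex on vertex type `V`: a downward-closed
set of finite sets containing the empty set when nonempty is not required;
we only require downward closure. -/
def IsComplex {V : Type} (Δ : Set (Finset V)) : Prop :=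
  ∀ F ∈ Δ, ∀ G : Finset V, G ⊆ F → G ∈ Δ

/-- `F` is a facet (maximal face) of `Δ`. -/
def IsFacet {V : Type} (Δ : Set (Finset V)) (F : Finset V) : Prop :=
  F ∈ Δ ∧ ∀ G ∈ Δ, F ⊆ G → F = G

/-- A complex is pure if all facets have the same cardinality. -/
def IsPure {V : Type} (Δ : Set (Finset V)) : Prop :=
  ∀ F G : Finset V, IsFacet Δ F → IsFacet Δ G → F.card = G.card

/-- `Δ` has dimension `d - 1` iff the largest cardinality of a face is `d`. -/
def HasDimCard {V : Type} [Fintype V] (Δ : Set (Finset V)) (d : ℕ) : Prop :=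
  (∃ F ∈ Δ, F.card = d) ∧ ∀ F ∈ Δ, F.card ≤ d

/-- The link of a face `F` in `Δ`. -/
def linkC {V : Type} (Δ : Set (Finset V)) (F : Finset V) : Set (Finset V) :=
  { G | Disjoint G F ∧ G ∪ F ∈ Δ }

/-- The Stanley-Reisner ideal of `Δ` over `k`: generated by the monomials
supported on the non-faces of `Δ`. -/
def SRIdeal (k : Type) [Field k] {V : Type} [Fintype V] (Δ : Set (Finset V)) :
    Ideal (MvPolynomial V k) :=
  Ideal.span { m | ∃ F : Finset V, F ∉ Δ ∧ m = ∏ v ∈ F, MvPolynomial.X v }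

/-- The Stanley-Reisner ring `k[Δ]`. -/
abbrev SRRing (k : Type) [Field k] {V : Type} [Fintype V] (Δ : Set (Finset V)) :=
  MvPolynomial V k ⧸ SRIdeal k Δ

/-- `Δ` is Cohen-Macaulay over `k` iff its Stanley-Reisner ring admits a
regular sequence, contained in the irrelevant maximal ideal, whose length is
the Krull dimension of the ring (i.e. depth = dimension). -/
def IsCM (k : Type) [Field k] {V : Type} [Fintype V] (Δ : Set (Finset V)) : Prop :=
  ∃ rs : List (SRRing k Δ),
    (∀ r ∈ rs, r ∈ Ideal.span
      (Set.range fun v : V => Ideal.Quotient.mk (SRIdeal k Δ) (MvPolynomial.X v))) ∧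
    RingTheory.Sequence.IsRegular (SRRing k Δ) rs ∧
    (rs.length : WithBot (WithTop ℕ)) = ringKrullDim (SRRing k Δ)

/-- `Δ` is `CM_t` over `k`: pure, and the link of every face of cardinality
at least `t` is Cohen-Macaulay over `k`. -/
def IsCMt (k : Type) [Field k] {V : Type} [Fintype V] (Δ : Set (Finset V)) (t : ℕ) : Prop :=
  IsPure Δ ∧ ∀ F ∈ Δ, t ≤ F.card → IsCM k (linkC Δ F)

/-- The independence complex of a graph. -/
def indC {V : Type} (G : SimpleGraph V) : Set (Finset V) :=
  { F | ∀ u ∈ F, ∀ v ∈ F, ¬ G.Adj u v }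

/-- A graph is unmixed if its independence complex is pure. -/
def Unmixed {V : Type} (G : SimpleGraph V) : Prop := IsPure (indC G)

/-- The closed neighborhood `N[v]` of a vertex. -/
def closedNbhd {V : Type} (G : SimpleGraph V) (v : V) : Set V :=
  insert v (G.neighborSet v)

/-- The induced subgraph `G \ N[v]` on the complement of the closed
neighborhood of `v`. -/
def delNbhd {V : Type} (G : SimpleGraph V) (v : V) :
    SimpleGraph ((closedNbhd G v)ᶜ : Set V) :=
  SimpleGraph.induce _ G

/-- A pure order of a bipartite graph `G`, given by labelings
`x y : Fin n → V` of the two parts. -/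
def IsPureOrder {V : Type} (G : SimpleGraph V) {n : ℕ} (x y : Fin n → V) : Prop :=
  Function.Bijective (Sum.elim x y) ∧
  (∀ i j : Fin n, ¬ G.Adj (x i) (x j)) ∧
  (∀ i j : Fin n, ¬ G.Adj (y i) (y j)) ∧
  (∀ i : Fin n, G.Adj (x i) (y i)) ∧
  (∀ i j k : Fin n, i ≠ j → j ≠ k → i ≠ k →
    G.Adj (x i) (y j) → G.Adj (x j) (y k) → G.Adj (x i) (y k))

noncomputable instance fintypeOfSetCompl {V : Type} [Fintype V] (s : Set V) : Fintype s :=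
  s.toFinite.fintype

/-- The join of two simplicial complexes on disjoint vertex sets. -/
def joinC {V W : Type} (Δ : Set (Finset V)) (Δ' : Set (Finset W)) :
    Set (Finset (V ⊕ W)) :=
  { F | ∃ A ∈ Δ, ∃ B ∈ Δ',
      F = A.map ⟨Sum.inl, Sum.inl_injective⟩ ∪ B.map ⟨Sum.inr, Sum.inr_injective⟩ }

end

/-- The graph obtained from `G` by replacing each perfect matching edge `x i y i`
of a pure order by a complete bipartite graph `K_{n i, n i}`, preserving all other
adjacencies: vertex `x_{i,p}` is adjacent to `y_{j,q}` iff `i = j` (the new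
complete bipartite block) or `x i` is adjacent to `y j` in `G`. -/
def replaceGraph {V : Type} (G : SimpleGraph V) {d : ℕ} (x y : Fin d → V)
    (nn : Fin d → ℕ) :
    SimpleGraph ((Σ i : Fin d, Fin (nn i)) ⊕ (Σ i : Fin d, Fin (nn i))) where
  Adj a b :=
    match a, b with
    | .inl p, .inr q => p.1 = q.1 ∨ G.Adj (x p.1) (y q.1)
    | .inr q, .inl p => p.1 = q.1 ∨ G.Adj (x p.1) (y q.1)
    | _, _ => False
  symm := ⟨by rintro (p | p) (q | q) h <;> simp_all⟩
  loopless := ⟨by rintro (p | p) h <;> simp_all⟩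

/-- Replacing the perfect matching edges of a pure order of an unmixed bipartite
graph by complete bipartite graphs yields an unmixed graph. -/
theorem replaceGraph_unmixed {V : Type} [Fintype V] (G : SimpleGraph V)
    (hunm : Unmixed G) {d : ℕ} (x y : Fin d → V) (hpo : IsPureOrder G x y)
    (nn : Fin d → ℕ) (hpos : ∀ i, 0 < nn i) :
    Unmixed (replaceGraph G x y nn) := by
  classical
  obtain ⟨hbij, hxx, hyy, hmatch, -⟩ := hpo
  have injx : Function.Injective x := fun a b h =>
    Sum.inl.inj (hbij.1 (show Sum.elim x y (Sum.inl a) = Sum.elim x y (Sum.inl b) from h))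
  have injy : Function.Injective y := fun a b h =>
    Sum.inr.inj (hbij.1 (show Sum.elim x y (Sum.inr a) = Sum.elim x y (Sum.inr b) from h))
  have xney : ∀ a b, x a ≠ y b := fun a b h => by
    have := hbij.1 (show Sum.elim x y (Sum.inl a) = Sum.elim x y (Sum.inr b) from h)
    simp at this
  -- the set X = {x i} is a facet of indC G of cardinality d
  have hXfacet : IsFacet (indC G) (Finset.univ.image x) := by
    constructor
    · intro u hu v hv
      simp only [Finset.mem_image] at hu hv
      obtain ⟨i, -, rfl⟩ := hu; obtain ⟨j, -, rfl⟩ := hv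
      exact hxx i j
    · intro B hB hXB
      refine Finset.Subset.antisymm hXB fun b hb => ?_
      obtain ⟨w, rfl⟩ := hbij.2 b
      cases w with
      | inl i => exact Finset.mem_image_of_mem x (Finset.mem_univ i)
      | inr j =>
        exact absurd (hmatch j)
          (hB _ (hXB (Finset.mem_image_of_mem x (Finset.mem_univ j))) _ hb)
  show IsPure (indC (replaceGraph G x y nn))
  suffices h : ∀ H, IsFacet (indC (replaceGraph G x y nn)) H → H.card = ∑ i, nn i by
    intro F F' hF hF'; rw [h F hF, h F' hF']
  intro F hF
  have hFind : F ∈ indC (replaceGraph G x y nn) := hF.1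
  -- lemma for adding an x-copy
  have addL : ∀ (j : Fin d) (k : Fin (nn j)),
      (∀ q : (Σ i : Fin d, Fin (nn i)), Sum.inr q ∈ F →
        ¬(j = q.1 ∨ G.Adj (x j) (y q.1))) →
      (Sum.inl ⟨j, k⟩ : (Σ i : Fin d, Fin (nn i)) ⊕ (Σ i : Fin d, Fin (nn i))) ∈ F := by
    intro j k hq
    have hins : insert (Sum.inl ⟨j, k⟩ :
        (Σ i : Fin d, Fin (nn i)) ⊕ (Σ i : Fin d, Fin (nn i))) F
        ∈ indC (replaceGraph G x y nn) := by
      intro u hu v hv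
      rcases Finset.mem_insert.mp hu with rfl | hu
      · rcases Finset.mem_insert.mp hv with rfl | hv
        · exact (replaceGraph G x y nn).loopless.irrefl _
        · cases v with
          | inl p => exact fun h => h
          | inr q => exact hq q hv
      · rcases Finset.mem_insert.mp hv with rfl | hv
        · cases u with
          | inl p => exact fun h => h
          | inr q => exact fun h => hq q hu ((replaceGraph G x y nn).adj_symm h)
        · exact hFind u hu v hv
    have := hF.2 _ hins (Finset.subset_insert _ _)
    rw [this]; exact Finset.mem_insert_self _ _
  -- lemma for adding a y-copy
  have addR : ∀ (j : Fin d) (k : Fin (nn j)),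
      (∀ q : (Σ i : Fin d, Fin (nn i)), Sum.inl q ∈ F →
        ¬(q.1 = j ∨ G.Adj (x q.1) (y j))) →
      (Sum.inr ⟨j, k⟩ : (Σ i : Fin d, Fin (nn i)) ⊕ (Σ i : Fin d, Fin (nn i))) ∈ F := by
    intro j k hq
    have hins : insert (Sum.inr ⟨j, k⟩ :
        (Σ i : Fin d, Fin (nn i)) ⊕ (Σ i : Fin d, Fin (nn i))) F
        ∈ indC (replaceGraph G x y nn) := by
      intro u hu v hv
      rcases Finset.mem_insert.mp hu with rfl | hu
      · rcases Finset.mem_insert.mp hv with rfl | hv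
        · exact (replaceGraph G x y nn).loopless.irrefl _
        · cases v with
          | inl p => exact fun h => hq p hv ((replaceGraph G x y nn).adj_symm h)
          | inr q => exact fun h => h
      · rcases Finset.mem_insert.mp hv with rfl | hv
        · cases u with
          | inl p => exact fun h => hq p hu h
          | inr q => exact fun h => h
        · exact hFind u hu v hv
    have := hF.2 _ hins (Finset.subset_insert _ _)
    rw [this]; exact Finset.mem_insert_self _ _
  set S : Finset (Fin d) := Finset.univ.filter (fun i => ∃ k : Fin (nn i),
    (Sum.inl ⟨i, k⟩ : (Σ i : Fin d, Fin (nn i)) ⊕ (Σ i : Fin d, Fin (nn i))) ∈ F) with hSdef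
  set T : Finset (Fin d) := Finset.univ.filter (fun i => ∃ k : Fin (nn i),
    (Sum.inr ⟨i, k⟩ : (Σ i : Fin d, Fin (nn i)) ⊕ (Σ i : Fin d, Fin (nn i))) ∈ F) with hTdef
  have memS : ∀ p : (Σ i : Fin d, Fin (nn i)), Sum.inl p ∈ F → p.1 ∈ S := by
    intro p hp
    exact Finset.mem_filter.mpr ⟨Finset.mem_univ _, ⟨p.2, hp⟩⟩
  have memT : ∀ p : (Σ i : Fin d, Fin (nn i)), Sum.inr p ∈ F → p.1 ∈ T := by
    intro p hp
    exact Finset.mem_filter.mpr ⟨Finset.mem_univ _, ⟨p.2, hp⟩⟩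
  have fullL : ∀ j ∈ S, ∀ k : Fin (nn j),
      (Sum.inl ⟨j, k⟩ : (Σ i : Fin d, Fin (nn i)) ⊕ (Σ i : Fin d, Fin (nn i))) ∈ F := by
    intro j hj k
    obtain ⟨k0, hk0⟩ := (Finset.mem_filter.mp hj).2
    exact addL j k fun q hq h => hFind _ hk0 _ hq h
  have fullR : ∀ j ∈ T, ∀ k : Fin (nn j),
      (Sum.inr ⟨j, k⟩ : (Σ i : Fin d, Fin (nn i)) ⊕ (Σ i : Fin d, Fin (nn i))) ∈ F := by
    intro j hj k
    obtain ⟨k0, hk0⟩ := (Finset.mem_filter.mp hj).2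
    exact addR j k fun q hq h => hFind _ hq _ hk0 h
  -- decompose F
  have hFeq : F = (S.sigma fun i => (Finset.univ : Finset (Fin (nn i)))).map
      ⟨Sum.inl, Sum.inl_injective⟩ ∪
      (T.sigma fun i => (Finset.univ : Finset (Fin (nn i)))).map
      ⟨Sum.inr, Sum.inr_injective⟩ := by
    ext a
    simp only [Finset.mem_union, Finset.mem_map, Finset.mem_sigma, Finset.mem_univ,
      and_true, Function.Embedding.coeFn_mk]
    cases a with
    | inl p =>
      constructor
      · intro h; exact Or.inl ⟨p, memS p h, rfl⟩
      · rintro (⟨q, hq, hqe⟩ | ⟨q, hq, hqe⟩)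
        · obtain rfl := Sum.inl.inj hqe; exact fullL q.1 hq q.2
        · exact absurd hqe (by simp)
    | inr p =>
      constructor
      · intro h; exact Or.inr ⟨p, memT p h, rfl⟩
      · rintro (⟨q, hq, hqe⟩ | ⟨q, hq, hqe⟩)
        · exact absurd hqe (by simp)
        · obtain rfl := Sum.inr.inj hqe; exact fullR q.1 hq q.2
  have hcard : F.card = (∑ i ∈ S, nn i) + ∑ i ∈ T, nn i := by
    rw [hFeq, Finset.card_union_of_disjoint, Finset.card_map, Finset.card_map,
      Finset.card_sigma, Finset.card_sigma]
    · simp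
    · rw [Finset.disjoint_left]
      rintro a ha hb
      obtain ⟨q, -, rfl⟩ := Finset.mem_map.mp ha
      obtain ⟨q', -, h⟩ := Finset.mem_map.mp hb
      exact absurd h (by simp)
  -- the corresponding set in G
  set A : Finset V := S.image x ∪ T.image y with hAdef
  have hAind : A ∈ indC G := by
    intro u hu v hv
    rcases Finset.mem_union.mp hu with hu | hu <;>
      rcases Finset.mem_union.mp hv with hv | hv <;>
      simp only [Finset.mem_image] at hu hv <;>
      obtain ⟨i, hi, rfl⟩ := hu <;> obtain ⟨j, hj, rfl⟩ := hv
    · exact hxx i j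
    · obtain ⟨k, hk⟩ := (Finset.mem_filter.mp hi).2
      obtain ⟨l, hl⟩ := (Finset.mem_filter.mp hj).2
      exact fun h => hFind _ hk _ hl (Or.inr h)
    · obtain ⟨k, hk⟩ := (Finset.mem_filter.mp hj).2
      obtain ⟨l, hl⟩ := (Finset.mem_filter.mp hi).2
      exact fun h => hFind _ hk _ hl (Or.inr (G.adj_symm h))
    · exact hyy i j
  have hAfacet : IsFacet (indC G) A := by
    refine ⟨hAind, fun B hB hAB => ?_⟩
    refine Finset.Subset.antisymm hAB fun b hb => ?_
    obtain ⟨w, rfl⟩ := hbij.2 b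
    cases w with
    | inl j =>
      have hjS : j ∈ S := by
        refine memS ⟨j, ⟨0, hpos j⟩⟩ (addL j ⟨0, hpos j⟩ fun q hq h => ?_)
        have hqT : q.1 ∈ T := memT q hq
        have hyB : y q.1 ∈ B :=
          hAB (Finset.mem_union_right _ (Finset.mem_image_of_mem y hqT))
        rcases h with h | h
        · exact hB _ hb _ hyB (h ▸ hmatch j)
        · exact hB _ hb _ hyB h
      exact Finset.mem_union_left _ (Finset.mem_image_of_mem x hjS)
    | inr j =>
      have hjT : j ∈ T := by
        refine memT ⟨j, ⟨0, hpos j⟩⟩ (addR j ⟨0, hpos j⟩ fun q hq h => ?_)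
        have hqS : q.1 ∈ S := memS q hq
        have hxB : x q.1 ∈ B :=
          hAB (Finset.mem_union_left _ (Finset.mem_image_of_mem x hqS))
        rcases h with h | h
        · exact hB _ hxB _ hb (h ▸ hmatch q.1)
        · exact hB _ hxB _ hb h
      exact Finset.mem_union_right _ (Finset.mem_image_of_mem y hjT)
  have hSTdisj : Disjoint S T := by
    rw [Finset.disjoint_left]
    intro i hiS hiT
    obtain ⟨k, hk⟩ := (Finset.mem_filter.mp hiS).2
    obtain ⟨l, hl⟩ := (Finset.mem_filter.mp hiT).2
    exact hFind _ hk _ hl (Or.inl rfl)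
  have hAcard : A.card = d := by
    have h1 := hunm A (Finset.univ.image x) hAfacet hXfacet
    rw [h1, Finset.card_image_of_injective _ injx, Finset.card_univ, Fintype.card_fin]
  have hSTcard : S.card + T.card = d := by
    have hdisj2 : Disjoint (S.image x) (T.image y) := by
      rw [Finset.disjoint_left]
      rintro a ha hb
      obtain ⟨i, -, rfl⟩ := Finset.mem_image.mp ha
      obtain ⟨j, -, h⟩ := Finset.mem_image.mp hb
      exact xney i j h.symm
    have h2 : A.card = S.card + T.card := by
      rw [hAdef, Finset.card_union_of_disjoint hdisj2,
        Finset.card_image_of_injective _ injx, Finset.card_image_of_injective _ injy]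
    omega
  have hSTuniv : S ∪ T = Finset.univ := by
    apply Finset.eq_univ_of_card
    rw [Finset.card_union_of_disjoint hSTdisj, hSTcard, Fintype.card_fin]
  rw [hcard, ← Finset.sum_union hSTdisj, hSTuniv]
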